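/- Context splitting respects environment typing: if U | μ : V : Γ [ro: r, rw: w] and Γ splits into Γ₁ and Γ₂ (shared bindings having shareable types, i.e. kind containing S), then there exist r₁, r₂, w₁, w₂ with r = r₁ ∪ r₂, w = w₁ ∪ w₂, w₁ ∩ w₂ = ∅, such that U | μ : V : Γ₁ [ro: r₁, rw: w₁] and U | μ : V : Γ₂ [ro: r₂, rw: w₂]. -/

import Mathlib

/-- Permissions: Discardable, Shareable, Escapable. -/
inductive Perm | D | S | E
deriving DecidableEq

/-- Kinds are sets of permissions. -/
abbrev Kind := Set Perm

/-- Storage modes. -/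
inductive Mode | readOnly | writable | unboxed

/-- The kind of a mode. -/
def kindOf : Mode → Kind
  | .readOnly => {Perm.D, Perm.S}
  | .writable => {Perm.E}
  | .unboxed  => {Perm.D, Perm.S, Perm.E}

/-- (Closed) types: unit, primitives, and records with possibly-taken fields
    (`true` = taken) and a storage mode. -/
inductive Ty
  | unit
  | prim
  | record (fs : List (Ty × Bool)) (m : Mode)

/-- The kinding judgement for closed types. -/
inductive Kinding : Ty → Kind → Prop
  | unit : Kinding .unit κ
  | prim : Kinding .prim κ
  | record : κ ⊆ kindOf m → (∀ p ∈ fs, p.2 = false → Kinding p.1 κ) →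
      Kinding (.record fs m) κ

abbrev Ptr := ℕ

/-- Update-semantics values: literals, unit, records, and pointers. -/
inductive UVal
  | lit (n : ℕ)
  | unit
  | rcd (us : List UVal)
  | ptr (p : Ptr)

/-- Value-semantics values: literals, unit, and records. -/
inductive VVal
  | lit (n : ℕ)
  | unit
  | rcd (vs : List VVal)

/-- Mutable stores: partial maps from pointers to update-semantics values. -/
abbrev Store := Ptr → Option UVal

mutual
/-- The correspondence relation `u | μ : v : τ [ro: r, rw: w]` between an
    update-semantics value (with store) and a value-semantics value at type τ,
    collecting read-only pointers r and writable pointers w reachable from u. -/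
inductive Corr : UVal → Store → VVal → Ty → Set Ptr → Set Ptr → Prop
  | lit : Corr (.lit n) μ (.lit n) .prim ∅ ∅
  | unit : Corr .unit μ .unit .unit ∅ ∅
  | recU : CorrFields us μ vs fs r w →
      Corr (.rcd us) μ (.rcd vs) (.record fs .unboxed) r w
  | recW : μ p = some (.rcd us) → CorrFields us μ vs fs r w →
      Corr (.ptr p) μ (.rcd vs) (.record fs .writable) r ({p} ∪ w)
  | recR : μ p = some (.rcd us) → CorrFields us μ vs fs r ∅ →
      Corr (.ptr p) μ (.rcd vs) (.record fs .readOnly) ({p} ∪ r) ∅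

/-- Field-wise correspondence, with non-aliasing of writable pointers;
    taken fields are skipped. -/
inductive CorrFields : List UVal → Store → List VVal → List (Ty × Bool) → Set Ptr → Set Ptr → Prop
  | nil : CorrFields [] μ [] [] ∅ ∅
  | cons : Corr u μ v τ r w → CorrFields us μ vs fs r' w' →
      w ∩ (r' ∪ w') = ∅ → w' ∩ (r ∪ w) = ∅ →
      CorrFields (u :: us) μ (v :: vs) ((τ, false) :: fs) (r ∪ r') (w ∪ w')
  | taken : CorrFields us μ vs fs r w →
      CorrFields (u :: us) μ (v :: vs) ((τ, true) :: fs) r w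
end

/-- Typing contexts (entries may be absent). -/
abbrev Ctx := List (Option Ty)

/-- Environment correspondence `U | μ : V : Γ [ro: r, rw: w]`, with
    non-aliasing of writable pointers between distinct bindings. -/
inductive EnvCorr : List UVal → Store → List VVal → Ctx → Set Ptr → Set Ptr → Prop
  | nil : EnvCorr [] μ [] [] ∅ ∅
  | consSome : Corr u μ v τ r w → EnvCorr U μ V Γ r' w' →
      w ∩ (r' ∪ w') = ∅ → w' ∩ (r ∪ w) = ∅ →
      EnvCorr (u :: U) μ (v :: V) (some τ :: Γ) (r ∪ r') (w ∪ w')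
  | consNone : EnvCorr U μ V Γ r w →
      EnvCorr (u :: U) μ (v :: V) (none :: Γ) r w

/-- Context splitting: bindings duplicated into both output contexts must have
    a shareable type (a kind containing S). -/
inductive Split : Ctx → Ctx → Ctx → Prop
  | nil : Split [] [] []
  | none : Split Γ Γ₁ Γ₂ → Split (none :: Γ) (none :: Γ₁) (none :: Γ₂)
  | left : Split Γ Γ₁ Γ₂ → Split (some τ :: Γ) (some τ :: Γ₁) (none :: Γ₂)
  | right : Split Γ Γ₁ Γ₂ → Split (some τ :: Γ) (none :: Γ₁) (some τ :: Γ₂)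
  | both : Kinding τ κ → Perm.S ∈ κ → Split Γ Γ₁ Γ₂ →
      Split (some τ :: Γ) (some τ :: Γ₁) (some τ :: Γ₂)

/-- Values of shareable type contain no writable pointers. -/
theorem corr_shareable_no_writable :
    (∀ {u μ v τ r w}, Corr u μ v τ r w →
      ∀ κ, Kinding τ κ → Perm.S ∈ κ → w = ∅) ∧
    (∀ {us μ vs fs r w}, CorrFields us μ vs fs r w →
      ∀ κ, (∀ p ∈ fs, p.2 = false → Kinding p.1 κ) → Perm.S ∈ κ → w = ∅) := by
  constructor
  · intro u μ v τ r w h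
    induction h using Corr.rec
      (motive_2 := fun us μ vs fs r w _ =>
        ∀ κ, (∀ p ∈ fs, p.2 = false → Kinding p.1 κ) → Perm.S ∈ κ → w = ∅) with
    | lit => intros; rfl
    | unit => intros; rfl
    | recU _ ih =>
        intros; rename_i κ hk hS
        cases hk with
        | record _ hf => exact ih κ hf hS
    | recW _ _ _ =>
        intros; rename_i κ hk hS
        cases hk with
        | record hsub _ =>
            have := hsub hS
            simp [kindOf] at this
    | recR _ _ _ => intros; rfl
    | nil => intros; rfl
    | cons _ _ _ _ ih ihf =>
        intros; rename_i κ hk hS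
        have h1 := ih κ (hk _ List.mem_cons_self rfl) hS
        have h2 := ihf κ (fun p hp => hk p (List.mem_cons_of_mem _ hp)) hS
        simp [h1, h2]
    | taken _ ihf =>
        intros; rename_i κ hk hS
        exact ihf κ (fun p hp => hk p (List.mem_cons_of_mem _ hp)) hS
  · intro us μ vs fs r w h
    induction h using CorrFields.rec
      (motive_1 := fun u μ v τ r w _ => ∀ κ, Kinding τ κ → Perm.S ∈ κ → w = ∅) with
    | lit => intros; rfl
    | unit => intros; rfl
    | recU _ ih =>
        intros; rename_i κ hk hS
        cases hk with
        | record _ hf => exact ih κ hf hS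
    | recW _ _ _ =>
        intros; rename_i κ hk hS
        cases hk with
        | record hsub _ =>
            have := hsub hS
            simp [kindOf] at this
    | recR _ _ _ => intros; rfl
    | nil => intros; rfl
    | cons _ _ _ _ ih ihf =>
        intros; rename_i κ hk hS
        have h1 := ih κ (hk _ List.mem_cons_self rfl) hS
        have h2 := ihf κ (fun p hp => hk p (List.mem_cons_of_mem _ hp)) hS
        simp [h1, h2]
    | taken _ ihf =>
        intros; rename_i κ hk hS
        exact ihf κ (fun p hp => hk p (List.mem_cons_of_mem _ hp)) hS

/-- Context splitting respects environment typing. -/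
theorem split_respects_envCorr {U : List UVal} {μ : Store} {V : List VVal}
    {Γ Γ₁ Γ₂ : Ctx} {r w : Set Ptr}
    (h : EnvCorr U μ V Γ r w) (hs : Split Γ Γ₁ Γ₂) :
    ∃ r₁ r₂ w₁ w₂ : Set Ptr, r = r₁ ∪ r₂ ∧ w = w₁ ∪ w₂ ∧ w₁ ∩ w₂ = ∅ ∧
      EnvCorr U μ V Γ₁ r₁ w₁ ∧ EnvCorr U μ V Γ₂ r₂ w₂ := by
  induction hs generalizing U V r w with
  | nil =>
      cases h
      exact ⟨∅, ∅, ∅, ∅, by simp, by simp, by simp, .nil, .nil⟩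
  | none _ ih =>
      cases h with
      | consNone h' =>
          obtain ⟨r₁, r₂, w₁, w₂, hr, hw, hd, h₁, h₂⟩ := ih h'
          exact ⟨r₁, r₂, w₁, w₂, hr, hw, hd, .consNone h₁, .consNone h₂⟩
  | left _ ih =>
      cases h with
      | @consSome u0 μ0 v0 τ0 r0 w0 U0 V0 Γ0 r' w' hc h' hd1 hd2 =>
          obtain ⟨r₁, r₂, w₁, w₂, hr, hw, hd, h₁, h₂⟩ := ih h'
          subst hr hw
          refine ⟨r0 ∪ r₁, r₂, w0 ∪ w₁, w₂, ?_, ?_, ?_, ?_, .consNone h₂⟩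
          · rw [Set.union_assoc]
          · rw [Set.union_assoc]
          · rw [Set.eq_empty_iff_forall_notMem] at hd1 hd ⊢
            intro x hx
            simp only [Set.mem_inter_iff, Set.mem_union] at *
            rcases hx with ⟨hx1 | hx1, hx2⟩
            · exact hd1 x ⟨hx1, Or.inr (Or.inr hx2)⟩
            · exact hd x ⟨hx1, hx2⟩
          · refine .consSome hc h₁ ?_ ?_
            · rw [Set.eq_empty_iff_forall_notMem] at hd1 ⊢
              intro x hx
              simp only [Set.mem_inter_iff, Set.mem_union] at *
              exact hd1 x ⟨hx.1, by tauto⟩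
            · rw [Set.eq_empty_iff_forall_notMem] at hd2 ⊢
              intro x hx
              simp only [Set.mem_inter_iff, Set.mem_union] at *
              exact hd2 x ⟨Or.inl hx.1, hx.2⟩
  | right _ ih =>
      cases h with
      | @consSome u0 μ0 v0 τ0 r0 w0 U0 V0 Γ0 r' w' hc h' hd1 hd2 =>
          obtain ⟨r₁, r₂, w₁, w₂, hr, hw, hd, h₁, h₂⟩ := ih h'
          subst hr hw
          refine ⟨r₁, r0 ∪ r₂, w₁, w0 ∪ w₂, ?_, ?_, ?_, .consNone h₁, ?_⟩
          · ext x
            simp only [Set.mem_union]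
            tauto
          · ext x
            simp only [Set.mem_union]
            tauto
          · rw [Set.eq_empty_iff_forall_notMem] at hd1 hd ⊢
            intro x hx
            simp only [Set.mem_inter_iff, Set.mem_union] at *
            rcases hx with ⟨hx1, hx2 | hx2⟩
            · exact hd1 x ⟨hx2, by tauto⟩
            · exact hd x ⟨hx1, hx2⟩
          · refine .consSome hc h₂ ?_ ?_
            · rw [Set.eq_empty_iff_forall_notMem] at hd1 ⊢
              intro x hx
              simp only [Set.mem_inter_iff, Set.mem_union] at *
              exact hd1 x ⟨hx.1, by tauto⟩
            · rw [Set.eq_empty_iff_forall_notMem] at hd2 ⊢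
              intro x hx
              simp only [Set.mem_inter_iff, Set.mem_union] at *
              exact hd2 x ⟨Or.inr hx.1, hx.2⟩
  | both hk hS _ ih =>
      cases h with
      | @consSome u0 μ0 v0 τ0 r0 w0 U0 V0 Γ0 r' w' hc h' hd1 hd2 =>
          have hw0 : _ = (∅ : Set Ptr) :=
            corr_shareable_no_writable.1 hc _ hk hS
          obtain ⟨r₁, r₂, w₁, w₂, hr, hw, hd, h₁, h₂⟩ := ih h'
          subst hr hw hw0
          refine ⟨r0 ∪ r₁, r0 ∪ r₂, w₁, w₂, ?_, by simp, hd, ?_, ?_⟩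
          · ext x
            simp only [Set.mem_union]
            tauto
          · have := EnvCorr.consSome hc h₁ (by simp)
              (by
                rw [Set.eq_empty_iff_forall_notMem] at hd2 ⊢
                intro x hx
                simp only [Set.mem_inter_iff, Set.mem_union] at *
                exact hd2 x ⟨by tauto, hx.2⟩)
            simpa using this
          · have := EnvCorr.consSome hc h₂ (by simp)
              (by
                rw [Set.eq_empty_iff_forall_notMem] at hd2 ⊢
                intro x hx
                simp only [Set.mem_inter_iff, Set.mem_union] at *
                exact hd2 x ⟨by tauto, hx.2⟩)
            simpa using this
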